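/- Let A be a torsion-free abelian group such that for any two nonzero elements a₁, a₂ ∈ A, either τ(a₁) ≤ τ(a₂), or τ(a₂) ≤ τ(a₁), or π(τ(a₁)) ∩ π(τ(a₂)) = ∅. Then for every index set I with at least two elements, if the direct sum ⨁_{i∈I} A of copies of A is Krylov transitive, then ⨁_{i∈I} A is fully transitive. -/

import Mathlib

/-- `n` divides `x` in the group `G`. -/
def Divides {G : Type*} [AddCommGroup G] (n : ℕ) (x : G) : Prop :=
  ∃ z : G, n • z = x

/-- `χ(x) ≤ χ(y)`: every prime-power dividing `x` divides `y`. -/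
def HeightLE {G H : Type*} [AddCommGroup G] [AddCommGroup H] (x : G) (y : H) : Prop :=
  ∀ p k : ℕ, p.Prime → Divides (p ^ k) x → Divides (p ^ k) y

/-- `χ(x) = χ(y)`. -/
def HeightEq {G H : Type*} [AddCommGroup G] [AddCommGroup H] (x : G) (y : H) : Prop :=
  HeightLE x y ∧ HeightLE y x

def FullyTransitive (G : Type*) [AddCommGroup G] : Prop :=
  ∀ x y : G, HeightLE x y → ∃ φ : G →+ G, φ x = y

def KrylovTransitive (G : Type*) [AddCommGroup G] : Prop :=
  ∀ x y : G, HeightEq x y → ∃ φ : G →+ G, φ x = y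

def TransitiveGrp (G : Type*) [AddCommGroup G] : Prop :=
  ∀ x y : G, HeightEq x y → ∃ φ : G ≃+ G, φ x = y

def WeaklyTransitive (G : Type*) [AddCommGroup G] : Prop :=
  ∀ (x y : G) (φ ψ : G →+ G), φ x = y → ψ y = x → ∃ η : G ≃+ G, η x = y

def IsTorsionFreeGrp (G : Type*) [AddCommGroup G] : Prop :=
  ∀ (n : ℤ) (x : G), n ≠ 0 → n • x = 0 → x = 0

/-- `τ(x) ≤ τ(y)`. -/
def TypeLE {G H : Type*} [AddCommGroup G] [AddCommGroup H] (x : G) (y : H) : Prop :=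
  ∃ n : ℤ, n ≠ 0 ∧ HeightLE x (n • y)

/-- `τ(x) = τ(y)`. -/
def TypeEq {G H : Type*} [AddCommGroup G] [AddCommGroup H] (x : G) (y : H) : Prop :=
  TypeLE x y ∧ TypeLE y x

def Homogeneous (G : Type*) [AddCommGroup G] : Prop :=
  ∀ x y : G, x ≠ 0 → y ≠ 0 → TypeEq x y

/-- `π(G)`: primes `p` with `pG ≠ G`. -/
def piSet (G : Type*) [AddCommGroup G] : Set ℕ :=
  {p | p.Prime ∧ ¬ ∀ x : G, ∃ z : G, p • z = x}

/-- π(τ(a)): primes at which the height of a is finite. -/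
def piType {A : Type*} [AddCommGroup A] (a : A) : Set ℕ :=
  {p | p.Prime ∧ ∃ k : ℕ, ¬ Divides (p ^ k) a}

section KTTools

variable {G : Type*} [AddCommGroup G]

lemma kt_div_one (x : G) : Divides 1 x := ⟨x, one_nsmul x⟩

lemma kt_div_zero (n : ℕ) : Divides n (0 : G) := ⟨0, smul_zero n⟩

lemma kt_div_mul_left {m n : ℕ} {x : G} (h : Divides (m * n) x) : Divides m x := by
  obtain ⟨z, hz⟩ := h
  exact ⟨n • z, by rw [← mul_nsmul']; exact hz⟩

lemma kt_div_pow_le {p j k : ℕ} (hjk : j ≤ k) {x : G} (h : Divides (p ^ k) x) :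
    Divides (p ^ j) x := by
  have hk : p ^ k = p ^ j * p ^ (k - j) := by rw [← pow_add]; congr 1; omega
  exact kt_div_mul_left (hk ▸ h)

lemma kt_div_add {n : ℕ} {x y : G} (hx : Divides n x) (hy : Divides n y) :
    Divides n (x + y) := by
  obtain ⟨z, hz⟩ := hx; obtain ⟨w, hw⟩ := hy
  exact ⟨z + w, by rw [smul_add, hz, hw]⟩

lemma kt_div_neg {n : ℕ} {x : G} (hx : Divides n x) : Divides n (-x) := by
  obtain ⟨z, hz⟩ := hx; exact ⟨-z, by rw [smul_neg, hz]⟩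

lemma kt_div_zsmul {n : ℕ} {x : G} (c : ℤ) (hx : Divides n x) : Divides n (c • x) := by
  obtain ⟨z, hz⟩ := hx
  exact ⟨c • z, by rw [smul_comm, hz]⟩

lemma kt_div_nsmul {n : ℕ} {x : G} (c : ℕ) (hx : Divides n x) : Divides n (c • x) := by
  obtain ⟨z, hz⟩ := hx
  exact ⟨c • z, by rw [smul_comm, hz]⟩

lemma kt_div_int {n : ℕ} {x : G} : Divides n x ↔ ∃ z : G, (n : ℤ) • z = x := by
  constructor
  · rintro ⟨z, hz⟩; exact ⟨z, by rw [natCast_zsmul]; exact hz⟩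
  · rintro ⟨z, hz⟩; exact ⟨z, by rw [← natCast_zsmul]; exact hz⟩

/-- the `p`-height of an element, valued in `ℕ∞`. -/
noncomputable def pH (p : ℕ) (x : G) : ℕ∞ :=
  sSup ((fun k : ℕ => (k : ℕ∞)) '' {k : ℕ | Divides (p ^ k) x})

lemma kt_le_pH_iff {p : ℕ} {x : G} {k : ℕ} :
    (k : ℕ∞) ≤ pH p x ↔ Divides (p ^ k) x := by
  constructor
  · intro hk
    by_contra hnd
    rcases k with _ | k'
    · exact hnd (by simpa using kt_div_one x)
    · have hb : pH p x ≤ (k' : ℕ∞) := by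
        apply sSup_le
        rintro n ⟨j, hj, rfl⟩
        have : j ≤ k' := by
          by_contra hj'
          exact hnd (kt_div_pow_le (by omega) hj)
        simpa using this
      have := hk.trans hb
      simp only [Nat.cast_le] at this
      omega
  · intro hd
    exact le_sSup ⟨k, hd, rfl⟩

lemma kt_enat_eq_top {m : ℕ∞} (h : ∀ k : ℕ, (k : ℕ∞) ≤ m) : m = ⊤ := by
  induction m using ENat.recTopCoe with
  | top => rfl
  | coe n =>
    have := h (n + 1)
    simp only [Nat.cast_le] at this
    omega

lemma kt_enat_le_of_forall {m m' : ℕ∞} (h : ∀ k : ℕ, (k : ℕ∞) ≤ m → (k : ℕ∞) ≤ m') :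
    m ≤ m' := by
  induction m using ENat.recTopCoe with
  | top =>
    rw [kt_enat_eq_top (fun k => h k le_top)]
  | coe n => exact h n le_rfl

lemma kt_pH_top_iff {p : ℕ} {x : G} : pH p x = ⊤ ↔ ∀ k : ℕ, Divides (p ^ k) x := by
  constructor
  · intro ht k
    rw [← kt_le_pH_iff, ht]; exact le_top
  · intro hall
    exact kt_enat_eq_top fun k => kt_le_pH_iff.2 (hall k)

lemma kt_pH_zero (p : ℕ) : pH p (0 : G) = ⊤ :=
  kt_pH_top_iff.2 fun k => kt_div_zero _

lemma kt_pH_le_iff {H : Type*} [AddCommGroup H] {p : ℕ} {x : G} {y : H} :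
    pH p x ≤ pH p y ↔ ∀ k : ℕ, Divides (p ^ k) x → Divides (p ^ k) y := by
  constructor
  · intro hle k hk
    exact kt_le_pH_iff.1 ((kt_le_pH_iff.2 hk).trans hle)
  · intro hall
    exact kt_enat_le_of_forall fun k hk => kt_le_pH_iff.2 (hall k (kt_le_pH_iff.1 hk))

lemma kt_heightLE_iff {H : Type*} [AddCommGroup H] {x : G} {y : H} :
    HeightLE x y ↔ ∀ p : ℕ, p.Prime → pH p x ≤ pH p y := by
  constructor
  · intro hle p hp
    exact kt_pH_le_iff.2 fun k => hle p k hp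
  · intro hall p k hp hd
    exact kt_le_pH_iff.1 ((kt_le_pH_iff.2 hd).trans (hall p hp))

lemma kt_pH_neg {p : ℕ} {x : G} : pH p (-x) = pH p x := by
  apply le_antisymm <;>
    exact kt_pH_le_iff.2 fun k hk => by simpa using kt_div_neg hk

lemma kt_min_le_pH_add {p : ℕ} {x y : G} :
    min (pH p x) (pH p y) ≤ pH p (x + y) :=
  kt_enat_le_of_forall fun k hk =>
    kt_le_pH_iff.2 (kt_div_add (kt_le_pH_iff.1 (hk.trans (min_le_left _ _)))
      (kt_le_pH_iff.1 (hk.trans (min_le_right _ _))))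

lemma kt_pH_add_eq_left {p : ℕ} {x y : G} (hlt : pH p x < pH p y) :
    pH p (x + y) = pH p x := by
  apply le_antisymm
  · by_contra hc
    push_neg at hc
    have h1 : pH p x < min (pH p (x + y)) (pH p (-y)) := by
      rw [kt_pH_neg]; exact lt_min hc hlt
    have h2 : min (pH p (x + y)) (pH p (-y)) ≤ pH p x := by
      have := kt_min_le_pH_add (p := p) (x := x + y) (y := -y)
      simpa using this
    exact absurd (h1.trans_le h2) (lt_irrefl _)
  · exact (min_eq_left hlt.le) ▸ kt_min_le_pH_add

lemma kt_pH_add_eq_right {p : ℕ} {x y : G} (hlt : pH p y < pH p x) :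
    pH p (x + y) = pH p y := by
  rw [add_comm]; exact kt_pH_add_eq_left hlt

end KTTools
section KTTools2

variable {G : Type*} [AddCommGroup G]

lemma kt_enat_succ_le_succ_iff {k : ℕ} {m : ℕ∞} :
    ((k : ℕ∞) + 1 ≤ m + 1) ↔ (k : ℕ∞) ≤ m := by
  induction m using ENat.recTopCoe with
  | top => simp
  | coe n =>
    constructor
    · intro hle
      have : ((k + 1 : ℕ) : ℕ∞) ≤ ((n + 1 : ℕ) : ℕ∞) := by push_cast; exact_mod_cast hle
      simp only [Nat.cast_le] at this
      exact_mod_cast Nat.cast_le.2 (by omega)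
    · intro hle
      have : k ≤ n := by exact_mod_cast hle
      have : ((k + 1 : ℕ) : ℕ∞) ≤ ((n + 1 : ℕ) : ℕ∞) := Nat.cast_le.2 (by omega)
      push_cast at this
      exact this

lemma kt_enat_eq_of_forall {m m' : ℕ∞} (h : ∀ k : ℕ, (k : ℕ∞) ≤ m ↔ (k : ℕ∞) ≤ m') :
    m = m' :=
  le_antisymm (kt_enat_le_of_forall fun k hk => (h k).1 hk)
    (kt_enat_le_of_forall fun k hk => (h k).2 hk)

lemma kt_pH_nsmul_ge {p n : ℕ} {x : G} : pH p x ≤ pH p (n • x) :=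
  kt_pH_le_iff.2 fun _ hk => kt_div_nsmul n hk

lemma kt_pH_zsmul_ge {p : ℕ} {n : ℤ} {x : G} : pH p x ≤ pH p (n • x) :=
  kt_pH_le_iff.2 fun _ hk => kt_div_zsmul n hk

lemma kt_pH_psmul (hTF : IsTorsionFreeGrp G) {p : ℕ} (hp : p.Prime) (x : G) :
    pH p (p • x) = pH p x + 1 := by
  have key : ∀ k : ℕ, Divides (p ^ (k + 1)) (p • x) ↔ Divides (p ^ k) x := by
    intro k
    constructor
    · rintro ⟨z, hz⟩
      rw [pow_succ', mul_smul] at hz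
      have h0 : p • (p ^ k • z - x) = 0 := by
        rw [smul_sub, hz, sub_self]
      have := hTF p (p ^ k • z - x) (by exact_mod_cast hp.ne_zero)
        (by rw [natCast_zsmul]; exact h0)
      exact ⟨z, sub_eq_zero.1 this⟩
    · rintro ⟨z, hz⟩
      exact ⟨z, by rw [pow_succ', mul_smul, hz]⟩
  apply kt_enat_eq_of_forall
  intro k
  rcases k with _ | k'
  · simp
  · have hcast : ((k' + 1 : ℕ) : ℕ∞) = (k' : ℕ∞) + 1 := by push_cast; ring
    rw [kt_le_pH_iff, key k', ← kt_le_pH_iff, hcast, kt_enat_succ_le_succ_iff]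

lemma kt_pH_pow_smul (hTF : IsTorsionFreeGrp G) {p : ℕ} (hp : p.Prime) (x : G) (e : ℕ) :
    pH p (p ^ e • x) = pH p x + e := by
  induction e with
  | zero => simp
  | succ n ih =>
    have heq : p ^ (n + 1) • x = p • (p ^ n • x) := by
      rw [pow_succ, mul_comm, mul_smul]
    rw [heq, kt_pH_psmul hTF hp, ih]
    push_cast
    ring

lemma kt_pH_coprime_smul {p n : ℕ} (hp : p.Prime) (hnd : ¬ p ∣ n) (x : G) :
    pH p (n • x) = pH p x := by
  apply le_antisymm _ kt_pH_nsmul_ge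
  apply kt_pH_le_iff.2
  intro k hk
  obtain ⟨z, hz⟩ := hk
  have hcop : Nat.Coprime n (p ^ k) := (Nat.Prime.coprime_iff_not_dvd hp).2 hnd |>.symm.pow_right k
  have hg : Int.gcd (n : ℤ) ((p ^ k : ℕ) : ℤ) = 1 := by
    rw [Int.gcd_natCast_natCast]; exact hcop
  obtain ⟨a, b, hab⟩ : ∃ a b : ℤ, a * n + b * (p ^ k : ℕ) = 1 := by
    have := Int.gcd_eq_gcd_ab (n : ℤ) ((p ^ k : ℕ) : ℤ)
    exact ⟨Int.gcdA _ _, Int.gcdB _ _, by rw [hg] at this; push_cast at this ⊢; linarith⟩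
  refine kt_div_int.2 ⟨a • z + b • x, ?_⟩
  have hzz : ((p ^ k : ℕ) : ℤ) • z = (n : ℤ) • x := by
    rw [natCast_zsmul, natCast_zsmul]; exact hz
  have hsplit : ((p ^ k : ℕ) : ℤ) • (a • z + b • x)
      = a • (((p ^ k : ℕ) : ℤ) • z) + b • (((p ^ k : ℕ) : ℤ) • x) := by
    rw [smul_add, smul_comm, smul_comm (((p ^ k : ℕ) : ℤ)) b]
  rw [hsplit, hzz, smul_smul, smul_smul, ← add_smul, hab, one_smul]

end KTTools2
section KTTools3

variable {G : Type*} [AddCommGroup G]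

lemma kt_pH_nsmul_eq (hTF : IsTorsionFreeGrp G) {p n : ℕ} (hp : p.Prime) (hn : n ≠ 0)
    (x : G) : pH p (n • x) = pH p x + (n.factorization p : ℕ∞) := by
  set e := n.factorization p with he
  have hdecomp : p ^ e * (n / p ^ e) = n := Nat.ordProj_mul_ordCompl_eq_self n p
  have hnd : ¬ p ∣ (n / p ^ e) := Nat.not_dvd_ordCompl hp hn
  have : n • x = p ^ e • ((n / p ^ e) • x) := by
    rw [← mul_smul, hdecomp]
  rw [this, kt_pH_pow_smul hTF hp, kt_pH_coprime_smul hp hnd]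

lemma kt_pH_zsmul_eq (hTF : IsTorsionFreeGrp G) {p : ℕ} {n : ℤ} (hp : p.Prime) (hn : n ≠ 0)
    (x : G) : pH p (n • x) = pH p x + (n.natAbs.factorization p : ℕ∞) := by
  have hna : n.natAbs ≠ 0 := Int.natAbs_ne_zero.2 hn
  rcases Int.natAbs_eq n with h | h
  · calc pH p (n • x) = pH p (n.natAbs • x) := by rw [← natCast_zsmul, ← h]
      _ = _ := kt_pH_nsmul_eq hTF hp hna x
  · calc pH p (n • x) = pH p (-(n.natAbs • x)) := by
          rw [← natCast_zsmul, ← neg_zsmul, ← h]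
      _ = pH p (n.natAbs • x) := kt_pH_neg
      _ = _ := kt_pH_nsmul_eq hTF hp hna x

lemma kt_fact_zero_of_not_dvd {p n : ℕ} (h : ¬ p ∣ n) : n.factorization p = 0 :=
  Nat.factorization_eq_zero_of_not_dvd h

lemma kt_dvd_of_fact_pos {p n : ℕ} (hp : p.Prime) (hn : n ≠ 0)
    (h : n.factorization p ≠ 0) : p ∣ n := by
  by_contra hnd
  exact h (kt_fact_zero_of_not_dvd hnd)

lemma kt_pow_le_pH_smul (hTF : IsTorsionFreeGrp G) {p v n : ℕ} (hp : p.Prime) (hn : n ≠ 0)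
    (h : p ^ v ∣ n) (x : G) : (v : ℕ∞) ≤ pH p (n • x) := by
  rw [kt_pH_nsmul_eq hTF hp hn]
  have : v ≤ n.factorization p := (Nat.Prime.pow_dvd_iff_le_factorization hp hn).1 h
  calc (v : ℕ∞) ≤ (n.factorization p : ℕ∞) := by exact_mod_cast this
    _ ≤ pH p x + (n.factorization p : ℕ∞) := le_add_self

end KTTools3

section KTTools4

variable {I : Type*} {A : Type*} [AddCommGroup A]

lemma kt_nsmul_single (n : ℕ) (i : I) (a : A) :
    n • Finsupp.single i a = Finsupp.single i (n • a) := by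
  induction n with
  | zero => simp
  | succ m ih => rw [succ_nsmul, succ_nsmul, Finsupp.single_add, ih]

lemma kt_finsupp_nsmul_apply (n : ℕ) (x : I →₀ A) (i : I) : (n • x) i = n • (x i) := by
  induction n with
  | zero => simp
  | succ m ih => rw [succ_nsmul, succ_nsmul, Finsupp.add_apply, ih]

lemma kt_div_finsupp_iff {n : ℕ} {x : I →₀ A} :
    Divides n x ↔ ∀ i, Divides n (x i) := by
  constructor
  · rintro ⟨z, hz⟩ i
    exact ⟨z i, by rw [← kt_finsupp_nsmul_apply, hz]⟩
  · intro hall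
    classical
    choose zf hzf using hall
    refine ⟨x.support.sum (fun i => Finsupp.single i (zf i)), ?_⟩
    have hs : n • (x.support.sum fun i => Finsupp.single i (zf i))
        = x.support.sum (fun i => Finsupp.single i (n • zf i)) := by
      induction x.support using Finset.induction_on with
      | empty => simp
      | insert _ _ hni ih =>
        rw [Finset.sum_insert hni, Finset.sum_insert hni, ← ih, nsmul_add, kt_nsmul_single]
    rw [hs]
    have : x.support.sum (fun i => Finsupp.single i (n • zf i))
        = x.support.sum (fun i => Finsupp.single i (x i)) := by
      apply Finset.sum_congr rfl
      intro i _
      rw [hzf]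
    rw [this]
    exact Finsupp.sum_single x

lemma kt_pH_coord (p : ℕ) (x : I →₀ A) (i : I) : pH p x ≤ pH p (x i) :=
  kt_pH_le_iff.2 fun _ hk => kt_div_finsupp_iff.1 hk i

lemma kt_pH_finsupp_inf {p : ℕ} (x : I →₀ A) :
    pH p x = x.support.inf (fun i => pH p (x i)) := by
  apply le_antisymm
  · exact Finset.le_inf fun i _ => kt_pH_coord p x i
  · apply kt_enat_le_of_forall
    intro k hk
    apply kt_le_pH_iff.2
    apply kt_div_finsupp_iff.2
    intro i
    by_cases hi : i ∈ x.support
    · exact kt_le_pH_iff.1 (hk.trans (Finset.inf_le hi))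
    · rw [Finsupp.notMem_support_iff.1 hi]
      exact kt_div_zero _
lemma kt_pH_exists_coord {p : ℕ} {x : I →₀ A} (hx : pH p x ≠ ⊤) :
    ∃ i, pH p (x i) = pH p x := by
  have hne : x.support.Nonempty := by
    by_contra hemp
    rw [Finset.not_nonempty_iff_eq_empty] at hemp
    rw [kt_pH_finsupp_inf, hemp] at hx
    simp at hx
  obtain ⟨i, hi, hv⟩ := Finset.exists_mem_eq_inf x.support hne (fun i => pH p (x i))
  exact ⟨i, by rw [kt_pH_finsupp_inf]; exact hv.symm⟩

lemma kt_pH_single {p : ℕ} (i : I) (a : A) : pH p (Finsupp.single i a) = pH p a := by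
  apply le_antisymm
  · have := kt_pH_coord p (Finsupp.single i a) i
    rwa [Finsupp.single_eq_same] at this
  · apply kt_pH_le_iff.2
    rintro k ⟨z, hz⟩
    refine kt_div_finsupp_iff.2 fun j => ?_
    by_cases hj : j = i
    · subst hj
      exact ⟨z, by rw [Finsupp.single_eq_same, hz]⟩
    · rw [Finsupp.single_eq_of_ne' (fun hc => hj hc.symm)]
      exact kt_div_zero _

lemma kt_pH_pair {p : ℕ} {i j : I} (hij : i ≠ j) (a b : A) :
    pH p (Finsupp.single i a + Finsupp.single j b) = min (pH p a) (pH p b) := by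
  apply le_antisymm
  · apply le_min
    · have := kt_pH_coord p (Finsupp.single i a + Finsupp.single j b) i
      rwa [Finsupp.add_apply, Finsupp.single_eq_same,
        Finsupp.single_eq_of_ne' (fun hc => hij hc.symm), add_zero] at this
    · have := kt_pH_coord p (Finsupp.single i a + Finsupp.single j b) j
      rwa [Finsupp.add_apply, Finsupp.single_eq_same, Finsupp.single_eq_of_ne' hij,
        zero_add] at this
  · calc min (pH p a) (pH p b)
        = min (pH p (Finsupp.single i a)) (pH p (Finsupp.single j b)) := by
          rw [kt_pH_single, kt_pH_single]
      _ ≤ _ := kt_min_le_pH_add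

lemma kt_heightEq_of_pH {x z : I →₀ A} (h : ∀ p : ℕ, p.Prime → pH p z = pH p x) :
    HeightEq z x :=
  ⟨kt_heightLE_iff.2 fun p hp => (h p hp).le, kt_heightLE_iff.2 fun p hp => (h p hp).ge⟩

end KTTools4
section KTTools5

variable {A : Type*} [AddCommGroup A]

lemma kt_typeLE_pH (hTF : IsTorsionFreeGrp A) {a b : A} (h : TypeLE a b) :
    ∃ N : ℕ, N ≠ 0 ∧ ∀ p : ℕ, p.Prime →
      pH p a ≤ pH p b + (N.factorization p : ℕ∞) := by
  obtain ⟨n, hn, hle⟩ := h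
  refine ⟨n.natAbs, Int.natAbs_ne_zero.2 hn, fun p hp => ?_⟩
  have := kt_heightLE_iff.1 hle p hp
  rwa [kt_pH_zsmul_eq hTF hp hn] at this

lemma kt_piType_mem {a : A} {p : ℕ} (hp : p.Prime) :
    p ∈ piType a ↔ pH p a ≠ ⊤ := by
  rw [piType, Set.mem_setOf_eq, Ne, kt_pH_top_iff]
  push_neg
  simp [hp]

lemma kt_disjoint_pH {a b : A} (hdis : piType a ∩ piType b = ∅) {p : ℕ} (hp : p.Prime) :
    pH p a = ⊤ ∨ pH p b = ⊤ := by
  by_contra hc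
  push_neg at hc
  have : p ∈ piType a ∩ piType b :=
    ⟨(kt_piType_mem hp).2 hc.1, (kt_piType_mem hp).2 hc.2⟩
  rw [hdis] at this
  exact this

lemma kt_pH_add_min_of_disj {a b : A} (hdis : piType a ∩ piType b = ∅) {p : ℕ}
    (hp : p.Prime) : pH p (a + b) = min (pH p a) (pH p b) := by
  rcases le_or_gt (pH p a) (pH p b) with hab | hab
  · rw [min_eq_left hab]
    rcases eq_or_lt_of_le hab with he | hl
    · have hat : pH p a = ⊤ := by
        rcases kt_disjoint_pH hdis hp with h | h
        · exact h
        · rw [he, h]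
      apply le_antisymm (hat ▸ le_top)
      have := kt_min_le_pH_add (p := p) (x := a) (y := b)
      rwa [← he, min_self] at this
    · exact kt_pH_add_eq_left hl
  · rw [min_eq_right hab.le]
    exact kt_pH_add_eq_right hab

/-- Step 1: existence of an "almost realizer" for the min of the heights of a
finite family of nonzero elements. -/
lemma kt_AR_aux (hTF : IsTorsionFreeGrp A)
    (hcomp : ∀ a₁ a₂ : A, a₁ ≠ 0 → a₂ ≠ 0 →
      TypeLE a₁ a₂ ∨ TypeLE a₂ a₁ ∨ piType a₁ ∩ piType a₂ = ∅)
    {I : Type*} (u : I → A) :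
    ∀ (s : Finset I), s.Nonempty → (∀ i ∈ s, u i ≠ 0) →
      ∃ (c : A) (K : ℕ), c ≠ 0 ∧ K ≠ 0 ∧
        (∀ p : ℕ, p.Prime → ¬ p ∣ K → pH p c = s.inf (fun i => pH p (u i))) ∧
        (∀ p : ℕ, p.Prime → s.inf (fun i => pH p (u i)) ≤ pH p c) := by
  intro s hs
  induction hs using Finset.Nonempty.cons_induction with
  | singleton i =>
    intro hnz
    refine ⟨u i, 1, hnz i (by simp), one_ne_zero, ?_, ?_⟩
    · intro p hp _
      simp
    · intro p hp
      simp
  | cons i s hi hs ih =>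
    intro hnz
    obtain ⟨c, K, hc0, hK0, heq, hge⟩ := ih (fun j hj => hnz j (Finset.mem_cons_of_mem hj))
    have hui : u i ≠ 0 := hnz i (Finset.mem_cons_self i s)
    rcases hcomp c (u i) hc0 hui with hcu | hcu | hdis
    · -- τ(c) ≤ τ(u i) : keep c
      obtain ⟨N, hN0, hNle⟩ := kt_typeLE_pH hTF hcu
      refine ⟨c, K * N, hc0, Nat.mul_ne_zero hK0 hN0, ?_, ?_⟩
      · intro p hp hpd
        have hpK : ¬ p ∣ K := fun hd => hpd (hd.mul_right N)
        have hpN : ¬ p ∣ N := fun hd => hpd (hd.mul_left K)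
        have h1 : pH p c ≤ pH p (u i) := by
          have := hNle p hp
          rwa [kt_fact_zero_of_not_dvd hpN, Nat.cast_zero, add_zero] at this
        rw [Finset.inf_cons, ← heq p hp hpK]
        exact (min_eq_right h1).symm
      · intro p hp
        rw [Finset.inf_cons]
        exact le_trans inf_le_right (hge p hp)
    · -- τ(u i) ≤ τ(c) : switch to u i
      obtain ⟨N, hN0, hNle⟩ := kt_typeLE_pH hTF hcu
      refine ⟨u i, K * N, hui, Nat.mul_ne_zero hK0 hN0, ?_, ?_⟩
      · intro p hp hpd
        have hpK : ¬ p ∣ K := fun hd => hpd (hd.mul_right N)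
        have hpN : ¬ p ∣ N := fun hd => hpd (hd.mul_left K)
        have h1 : pH p (u i) ≤ pH p c := by
          have := hNle p hp
          rwa [kt_fact_zero_of_not_dvd hpN, Nat.cast_zero, add_zero] at this
        rw [Finset.inf_cons, ← heq p hp hpK]
        exact (min_eq_left h1).symm
      · intro p hp
        rw [Finset.inf_cons]
        exact inf_le_left
    · -- disjoint π's
      by_cases hsum : c + u i = 0
      · -- u i = -c, heights of u i equal those of c
        have hui_c : ∀ p : ℕ, pH p (u i) = pH p c := by
          intro p
          have : u i = -c := by linear_combination (norm := abel) hsum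
          rw [this, kt_pH_neg]
        refine ⟨c, K, hc0, hK0, ?_, ?_⟩
        · intro p hp hpd
          rw [Finset.inf_cons, hui_c p, ← heq p hp hpd, min_self]
        · intro p hp
          rw [Finset.inf_cons]
          exact le_trans inf_le_right (hge p hp)
      · refine ⟨c + u i, K, hsum, hK0, ?_, ?_⟩
        · intro p hp hpd
          rw [kt_pH_add_min_of_disj hdis hp, Finset.inf_cons, ← heq p hp hpd, min_comm]
        · intro p hp
          rw [kt_pH_add_min_of_disj hdis hp, Finset.inf_cons]
          exact le_inf (inf_le_right.trans (hge p hp)) inf_le_left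

lemma kt_AR (hTF : IsTorsionFreeGrp A)
    (hcomp : ∀ a₁ a₂ : A, a₁ ≠ 0 → a₂ ≠ 0 →
      TypeLE a₁ a₂ ∨ TypeLE a₂ a₁ ∨ piType a₁ ∩ piType a₂ = ∅)
    {I : Type*} {x : I →₀ A} (hx : x ≠ 0) :
    ∃ (c : A) (K : ℕ), c ≠ 0 ∧ K ≠ 0 ∧
      (∀ p : ℕ, p.Prime → ¬ p ∣ K → pH p c = pH p x) ∧
      (∀ p : ℕ, p.Prime → pH p x ≤ pH p c) := by
  obtain ⟨c, K, hc0, hK0, heq, hge⟩ := kt_AR_aux hTF hcomp (fun i => x i) x.support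
    (Finsupp.support_nonempty_iff.2 hx) (fun i hi => Finsupp.mem_support_iff.1 hi)
  exact ⟨c, K, hc0, hK0,
    fun p hp hpd => by rw [heq p hp hpd, ← kt_pH_finsupp_inf],
    fun p hp => by rw [kt_pH_finsupp_inf]; exact hge p hp⟩

end KTTools5
section KTTools6

variable {A : Type*} [AddCommGroup A]

variable {m : ℕ → ℕ∞} {c b : A} {K : ℕ}

lemma kt_jump_aux (hb : ∀ p : ℕ, p.Prime → m p ≤ pH p b)
    (heq : ∀ p : ℕ, p.Prime → ¬ p ∣ K → pH p c = m p)
    {D p : ℕ} (hp : p.Prime) (hpK : ¬ p ∣ K)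
    (hj : m p < pH p (c + D • b)) : pH p b = m p ∧ m p ≠ ⊤ := by
  have hc : pH p c = m p := heq p hp hpK
  have h1 : m p ≤ pH p (D • b) := (hb p hp).trans kt_pH_nsmul_ge
  rcases eq_or_lt_of_le h1 with h2 | h2
  · refine ⟨le_antisymm ?_ (hb p hp), ne_top_of_lt hj⟩
    rw [h2]
    exact kt_pH_nsmul_ge
  · exfalso
    have : pH p (c + D • b) = m p := by
      rw [← hc] at h2 ⊢
      exact kt_pH_add_eq_left h2
    rw [this] at hj
    exact lt_irrefl _ hj

lemma kt_e_ge (hgec : ∀ p : ℕ, p.Prime → m p ≤ pH p c)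
    (hb : ∀ p : ℕ, p.Prime → m p ≤ pH p b)
    {D p : ℕ} (hp : p.Prime) : m p ≤ pH p (c + D • b) :=
  le_trans (le_min (hgec p hp) ((hb p hp).trans kt_pH_nsmul_ge)) kt_min_le_pH_add

lemma kt_two_jumps (hTF : IsTorsionFreeGrp A)
    (hb : ∀ p : ℕ, p.Prime → m p ≤ pH p b)
    (heq : ∀ p : ℕ, p.Prime → ¬ p ∣ K → pH p c = m p)
    {D D' p : ℕ} (hp : p.Prime) (hpK : ¬ p ∣ K) (hDD' : D < D')
    (hj : m p < pH p (c + D • b)) (hj' : m p < pH p (c + D' • b)) :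
    p ∣ (D' - D) := by
  obtain ⟨hbm, hmt⟩ := kt_jump_aux hb heq hp hpK hj
  have hsplit : (D' - D) • b + D • b = D' • b := by
    rw [← add_nsmul]
    congr 1
    omega
  have hdiff : (c + D' • b) + (-(c + D • b)) = (D' - D) • b := by
    rw [← hsplit]
    abel
  have hge : m p < pH p ((D' - D) • b) := by
    rw [← hdiff]
    calc m p < min (pH p (c + D' • b)) (pH p (-(c + D • b))) := by
          rw [kt_pH_neg]
          exact lt_min hj' hj
      _ ≤ _ := kt_min_le_pH_add
  rw [kt_pH_nsmul_eq hTF hp (by omega : D' - D ≠ 0), hbm] at hge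
  have hf : (D' - D).factorization p ≠ 0 := by
    intro h0
    rw [h0, Nat.cast_zero, add_zero] at hge
    exact lt_irrefl _ hge
  exact kt_dvd_of_fact_pos hp (by omega) hf

lemma kt_pair (hTF : IsTorsionFreeGrp A)
    (hcomp : ∀ a₁ a₂ : A, a₁ ≠ 0 → a₂ ≠ 0 →
      TypeLE a₁ a₂ ∨ TypeLE a₂ a₁ ∨ piType a₁ ∩ piType a₂ = ∅)
    (hgec : ∀ p : ℕ, p.Prime → m p ≤ pH p c)
    (heq : ∀ p : ℕ, p.Prime → ¬ p ∣ K → pH p c = m p)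
    (hb : ∀ p : ℕ, p.Prime → m p ≤ pH p b)
    {D D' : ℕ} (hDD' : D < D') (he : c + D • b ≠ 0) (he' : c + D' • b ≠ 0) :
    (∃ N : ℕ, N ≠ 0 ∧ ∀ p : ℕ, p.Prime → ¬ p ∣ (K * N) → pH p (c + D • b) = m p) ∨
    (∃ N : ℕ, N ≠ 0 ∧ ∀ p : ℕ, p.Prime → ¬ p ∣ (K * N) → pH p (c + D' • b) = m p) ∨
    (∀ p : ℕ, p.Prime → ¬ p ∣ K → pH p b = m p → m p ≠ ⊤ →
      (m p < pH p (c + D • b) ∨ m p < pH p (c + D' • b))) := by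
  rcases hcomp (c + D • b) (c + D' • b) he he' with hty | hty | hdis
  · left
    obtain ⟨N₀, hN₀, hNle⟩ := kt_typeLE_pH hTF hty
    refine ⟨N₀ * (D' - D), Nat.mul_ne_zero hN₀ (by omega), fun p hp hpd => ?_⟩
    have hpK : ¬ p ∣ K := fun hd => hpd (dvd_mul_of_dvd_left hd _)
    have hpN : ¬ p ∣ N₀ := fun hd =>
      hpd (dvd_mul_of_dvd_right (dvd_mul_of_dvd_left hd _) _)
    have hpDD : ¬ p ∣ (D' - D) := fun hd =>
      hpd (dvd_mul_of_dvd_right (dvd_mul_of_dvd_right hd _) _)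
    apply le_antisymm _ (kt_e_ge hgec hb hp)
    by_contra hc2
    push_neg at hc2
    have hj' : pH p (c + D' • b) = m p := by
      apply le_antisymm _ (kt_e_ge hgec hb hp)
      by_contra hc3
      push_neg at hc3
      exact hpDD (kt_two_jumps hTF hb heq hp hpK hDD' hc2 hc3)
    have := hNle p hp
    rw [hj', kt_fact_zero_of_not_dvd hpN, Nat.cast_zero, add_zero] at this
    exact absurd (hc2.trans_le this) (lt_irrefl _)
  · right; left
    obtain ⟨N₀, hN₀, hNle⟩ := kt_typeLE_pH hTF hty
    refine ⟨N₀ * (D' - D), Nat.mul_ne_zero hN₀ (by omega), fun p hp hpd => ?_⟩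
    have hpK : ¬ p ∣ K := fun hd => hpd (dvd_mul_of_dvd_left hd _)
    have hpN : ¬ p ∣ N₀ := fun hd =>
      hpd (dvd_mul_of_dvd_right (dvd_mul_of_dvd_left hd _) _)
    have hpDD : ¬ p ∣ (D' - D) := fun hd =>
      hpd (dvd_mul_of_dvd_right (dvd_mul_of_dvd_right hd _) _)
    apply le_antisymm _ (kt_e_ge hgec hb hp)
    by_contra hc2
    push_neg at hc2
    have hj : pH p (c + D • b) = m p := by
      apply le_antisymm _ (kt_e_ge hgec hb hp)
      by_contra hc3
      push_neg at hc3
      exact hpDD (kt_two_jumps hTF hb heq hp hpK hDD' hc3 hc2)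
    have := hNle p hp
    rw [hj, kt_fact_zero_of_not_dvd hpN, Nat.cast_zero, add_zero] at this
    exact absurd (hc2.trans_le this) (lt_irrefl _)
  · right; right
    intro p hp hpK hbm hmt
    by_contra hc2
    push_neg at hc2
    have h1 : pH p (c + D • b) = m p := le_antisymm hc2.1 (kt_e_ge hgec hb hp)
    have h2 : pH p (c + D' • b) = m p := le_antisymm hc2.2 (kt_e_ge hgec hb hp)
    have : p ∈ piType (c + D • b) ∩ piType (c + D' • b) :=
      ⟨(kt_piType_mem hp).2 (by rw [h1]; exact hmt),
       (kt_piType_mem hp).2 (by rw [h2]; exact hmt)⟩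
    rw [hdis] at this
    exact this

lemma kt_triple (hTF : IsTorsionFreeGrp A)
    (hcomp : ∀ a₁ a₂ : A, a₁ ≠ 0 → a₂ ≠ 0 →
      TypeLE a₁ a₂ ∨ TypeLE a₂ a₁ ∨ piType a₁ ∩ piType a₂ = ∅)
    (hgec : ∀ p : ℕ, p.Prime → m p ≤ pH p c)
    (heq : ∀ p : ℕ, p.Prime → ¬ p ∣ K → pH p c = m p)
    (hb : ∀ p : ℕ, p.Prime → m p ≤ pH p b)
    {D₁ D₂ D₃ : ℕ} (h12 : D₁ < D₂) (h23 : D₂ < D₃)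
    (he₁ : c + D₁ • b ≠ 0) (he₂ : c + D₂ • b ≠ 0) (he₃ : c + D₃ • b ≠ 0) :
    ∃ D N : ℕ, (D = D₁ ∨ D = D₂ ∨ D = D₃) ∧ N ≠ 0 ∧
      ∀ p : ℕ, p.Prime → ¬ p ∣ (K * N) → pH p (c + D • b) = m p := by
  rcases kt_pair hTF hcomp hgec heq hb h12 he₁ he₂ with ⟨N, hN, hJ⟩ | ⟨N, hN, hJ⟩ | d12
  · exact ⟨D₁, N, Or.inl rfl, hN, hJ⟩
  · exact ⟨D₂, N, Or.inr (Or.inl rfl), hN, hJ⟩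
  rcases kt_pair hTF hcomp hgec heq hb (h12.trans h23) he₁ he₃ with ⟨N, hN, hJ⟩ | ⟨N, hN, hJ⟩ | d13
  · exact ⟨D₁, N, Or.inl rfl, hN, hJ⟩
  · exact ⟨D₃, N, Or.inr (Or.inr rfl), hN, hJ⟩
  rcases kt_pair hTF hcomp hgec heq hb h23 he₂ he₃ with ⟨N, hN, hJ⟩ | ⟨N, hN, hJ⟩ | d23
  · exact ⟨D₂, N, Or.inr (Or.inl rfl), hN, hJ⟩
  · exact ⟨D₃, N, Or.inr (Or.inr rfl), hN, hJ⟩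
  refine ⟨D₁, (D₂ - D₁) * (D₃ - D₁), Or.inl rfl,
    Nat.mul_ne_zero (by omega) (by omega), fun p hp hpd => ?_⟩
  have hpK : ¬ p ∣ K := fun hd => hpd (dvd_mul_of_dvd_left hd _)
  have hp21 : ¬ p ∣ (D₂ - D₁) := fun hd =>
    hpd (dvd_mul_of_dvd_right (dvd_mul_of_dvd_left hd _) _)
  have hp31 : ¬ p ∣ (D₃ - D₁) := fun hd =>
    hpd (dvd_mul_of_dvd_right (dvd_mul_of_dvd_right hd _) _)
  apply le_antisymm _ (kt_e_ge hgec hb hp)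
  by_contra hc2
  push_neg at hc2
  have hj : m p < pH p (c + D₁ • b) := hc2
  obtain ⟨hbm, hmt⟩ := kt_jump_aux hb heq hp hpK hj
  rcases d23 p hp hpK hbm hmt with hj2 | hj3
  · exact hp21 (kt_two_jumps hTF hb heq hp hpK h12 hj hj2)
  · exact hp31 (kt_two_jumps hTF hb heq hp hpK (h12.trans h23) hj hj3)

end KTTools6
section KTTools7

variable {A : Type*} [AddCommGroup A] {I : Type*}

lemma kt_pH_sum_ge {p : ℕ} {C : ℕ∞} {ι : Type*} {s : Finset ι} {f : ι → A}
    (h : ∀ r ∈ s, C ≤ pH p (f r)) : C ≤ pH p (∑ r ∈ s, f r) := by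
  classical
  induction s using Finset.induction_on with
  | empty => simp [kt_pH_zero]
  | insert _ _ hni ih =>
    rename_i a s'
    rw [Finset.sum_insert hni]
    refine le_trans (le_min (h a (Finset.mem_insert_self a s'))
      (ih fun r hr => h r (Finset.mem_insert_of_mem hr))) kt_min_le_pH_add

/-- Construction of an element `t` realizing the heights of `x` exactly on a finite
set of primes and dominating them everywhere. -/
lemma kt_tconstr [Nonempty I] (hTF : IsTorsionFreeGrp A) (x : I →₀ A) (F : Finset ℕ)
    (hF : ∀ q ∈ F, q.Prime ∧ pH q x ≠ ⊤) :
    ∃ t : A, (∀ p : ℕ, p.Prime → pH p x ≤ pH p t) ∧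
      (∀ q ∈ F, pH q t = pH q x) := by
  classical
  have hcoord : ∀ q : ℕ, ∃ i : I, (q ∈ F → pH q (x i) = pH q x) := by
    intro q
    by_cases hq : q ∈ F
    · obtain ⟨i, hi⟩ := kt_pH_exists_coord (hF q hq).2
      exact ⟨i, fun _ => hi⟩
    · exact ⟨Classical.arbitrary I, fun hc => absurd hc hq⟩
  choose iq hiq using hcoord
  set M : ℕ → ℕ := fun q => ∏ q' ∈ F.erase q, q' ^ ((pH q' x).toNat + 1) with hM
  have hM0 : ∀ q, M q ≠ 0 := by
    intro q
    rw [hM]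
    rw [Finset.prod_ne_zero_iff]
    intro q' hq'
    exact pow_ne_zero _ (hF q' (Finset.mem_of_mem_erase hq')).1.ne_zero
  refine ⟨∑ q ∈ F, M q • x (iq q), ?_, ?_⟩
  · intro p hp
    apply kt_pH_sum_ge
    intro r _
    exact le_trans (kt_pH_coord p x _) kt_pH_nsmul_ge
  · intro q hq
    have hqP : q.Prime := (hF q hq).1
    have hqT : pH q x ≠ ⊤ := (hF q hq).2
    have hsplit : (∑ r ∈ F, M r • x (iq r))
        = M q • x (iq q) + ∑ r ∈ F.erase q, M r • x (iq r) :=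
      (Finset.add_sum_erase F _ hq).symm
    have hmain : pH q ((M q : ℕ) • x (iq q)) = pH q x := by
      have hcop : Nat.Coprime q (M q) := by
        apply Nat.Coprime.prod_right
        intro q' hq'
        have hq'P : q'.Prime := (hF q' (Finset.mem_of_mem_erase hq')).1
        have hne : q ≠ q' := fun hc => (Finset.mem_erase.1 hq').1 hc.symm
        exact Nat.Coprime.pow_right _ ((Nat.coprime_primes hqP hq'P).2 hne)
      rw [kt_pH_coprime_smul hqP (hqP.coprime_iff_not_dvd.1 hcop), hiq q hq]
    have hrest : (((pH q x).toNat + 1 : ℕ) : ℕ∞)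
        ≤ pH q (∑ r ∈ F.erase q, M r • x (iq r)) := by
      apply kt_pH_sum_ge
      intro r hr
      have hrne : r ≠ q := (Finset.mem_erase.1 hr).1
      have hrF : r ∈ F := Finset.mem_of_mem_erase hr
      have hdvd : q ^ ((pH q x).toNat + 1) ∣ M r := by
        rw [hM]
        exact Finset.dvd_prod_of_mem (fun q' => q' ^ ((pH q' x).toNat + 1))
          (Finset.mem_erase.2 ⟨fun hc => hrne hc.symm, hq⟩)
      exact kt_pow_le_pH_smul hTF hqP (hM0 r) hdvd _
    have hlt : pH q ((M q : ℕ) • x (iq q))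
        < pH q (∑ r ∈ F.erase q, M r • x (iq r)) := by
      rw [hmain]
      calc pH q x = (((pH q x).toNat : ℕ) : ℕ∞) := (ENat.coe_toNat hqT).symm
        _ < (((pH q x).toNat + 1 : ℕ) : ℕ∞) := Nat.cast_lt.2 (Nat.lt_succ_self _)
        _ ≤ _ := hrest
    rw [hsplit, kt_pH_add_eq_left hlt, hmain]

lemma kt_good {x : I →₀ A} {i₀ j : I} (hij : i₀ ≠ j) {s t : A} {K'' : ℕ}
    (hseq : ∀ p : ℕ, p.Prime → ¬ p ∣ K'' → pH p s = pH p x)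
    (hsge : ∀ p : ℕ, p.Prime → pH p x ≤ pH p s)
    (htge : ∀ p : ℕ, p.Prime → pH p x ≤ pH p t)
    (htF : ∀ q : ℕ, q.Prime → q ∣ K'' → pH q x ≠ ⊤ → pH q t = pH q x) :
    ∀ p : ℕ, p.Prime → pH p (Finsupp.single i₀ s + Finsupp.single j t) = pH p x := by
  intro p hp
  rw [kt_pH_pair hij]
  by_cases hpK : p ∣ K''
  · by_cases hxt : pH p x = ⊤
    · apply le_antisymm
      · rw [hxt]; exact le_top
      · exact le_min (hsge p hp) (htge p hp)
    · rw [htF p hp hpK hxt]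
      exact min_eq_right (hsge p hp)
  · rw [hseq p hp hpK]
    exact min_eq_left (htge p hp)

lemma kt_extract (h : KrylovTransitive (I →₀ A)) {x : I →₀ A} {i₀ j : I}
    {s₁ s₂ t : A}
    (h₁ : ∀ p : ℕ, p.Prime → pH p (Finsupp.single i₀ s₁ + Finsupp.single j t) = pH p x)
    (h₂ : ∀ p : ℕ, p.Prime → pH p (Finsupp.single i₀ s₂ + Finsupp.single j t) = pH p x) :
    ∃ φ : (I →₀ A) →+ (I →₀ A), φ x = Finsupp.single i₀ (s₁ - s₂) := by
  obtain ⟨φ₁, hφ₁⟩ := h x (Finsupp.single i₀ s₁ + Finsupp.single j t)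
    ⟨(kt_heightEq_of_pH h₁).2, (kt_heightEq_of_pH h₁).1⟩
  obtain ⟨φ₂, hφ₂⟩ := h x (Finsupp.single i₀ s₂ + Finsupp.single j t)
    ⟨(kt_heightEq_of_pH h₂).2, (kt_heightEq_of_pH h₂).1⟩
  refine ⟨φ₁ - φ₂, ?_⟩
  rw [AddMonoidHom.sub_apply, hφ₁, hφ₂, Finsupp.single_sub]
  abel

end KTTools7
section KTTools8

variable {A : Type*} [AddCommGroup A] {I : Type*}

lemma kt_step [Nonempty I] (hTF : IsTorsionFreeGrp A) (h : KrylovTransitive (I →₀ A))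
    {x : I →₀ A} {i₀ j : I} (hij : i₀ ≠ j) {c₀ b : A} {K₀ K₁ D : ℕ}
    (hK₁ : K₁ ≠ 0) (hdvd : K₀ ∣ K₁)
    (heq₀ : ∀ p : ℕ, p.Prime → ¬ p ∣ K₀ → pH p c₀ = pH p x)
    (hge₀ : ∀ p : ℕ, p.Prime → pH p x ≤ pH p c₀)
    (hb : ∀ p : ℕ, p.Prime → pH p x ≤ pH p b)
    (heq₁ : ∀ p : ℕ, p.Prime → ¬ p ∣ K₁ → pH p (c₀ + D • b) = pH p x) :
    ∃ φ : (I →₀ A) →+ (I →₀ A), φ x = Finsupp.single i₀ (D • b) := by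
  classical
  set F := K₁.primeFactors.filter (fun q => pH q x ≠ ⊤) with hFdef
  have hF : ∀ q ∈ F, q.Prime ∧ pH q x ≠ ⊤ := by
    intro q hq
    rw [hFdef, Finset.mem_filter] at hq
    exact ⟨Nat.prime_of_mem_primeFactors hq.1, hq.2⟩
  obtain ⟨t, htge, htF⟩ := kt_tconstr hTF x F hF
  have htF' : ∀ q : ℕ, q.Prime → q ∣ K₁ → pH q x ≠ ⊤ → pH q t = pH q x := by
    intro q hq hd ht
    apply htF
    rw [hFdef, Finset.mem_filter]
    exact ⟨Nat.mem_primeFactors.2 ⟨hq, hd, hK₁⟩, ht⟩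
  have h₁ := kt_good hij heq₁
    (fun p hp => kt_e_ge (m := fun p => pH p x) hge₀ hb hp) htge htF'
  have h₂ := kt_good hij
    (fun p hp hpd => heq₀ p hp (fun hc => hpd (hc.trans hdvd))) hge₀ htge htF'
  obtain ⟨φ, hφ⟩ := kt_extract h h₁ h₂
  refine ⟨φ, ?_⟩
  rw [hφ]
  congr 1
  exact add_sub_cancel_left c₀ (D • b)

lemma kt_combine {x : I →₀ A} {i₀ : I} {b : A} {D₁ D₂ : ℕ}
    (hg : Nat.gcd D₁ D₂ = 1)
    {φ₁ φ₂ : (I →₀ A) →+ (I →₀ A)}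
    (hφ₁ : φ₁ x = Finsupp.single i₀ (D₁ • b))
    (hφ₂ : φ₂ x = Finsupp.single i₀ (D₂ • b)) :
    ∃ φ : (I →₀ A) →+ (I →₀ A), φ x = Finsupp.single i₀ b := by
  set α := Nat.gcdA D₁ D₂ with hα
  set β := Nat.gcdB D₁ D₂ with hβ
  have hbez : (D₁ : ℤ) * α + (D₂ : ℤ) * β = 1 := by
    have := Nat.gcd_eq_gcd_ab D₁ D₂
    rw [hg] at this
    push_cast at this
    linarith
  let sm : ℤ → ((I →₀ A) →+ (I →₀ A)) := fun n =>
    { toFun := fun v => n • v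
      map_zero' := smul_zero n
      map_add' := fun u v => smul_add n u v }
  refine ⟨(sm α).comp φ₁ + (sm β).comp φ₂, ?_⟩
  have happ : ((sm α).comp φ₁ + (sm β).comp φ₂) x = α • (φ₁ x) + β • (φ₂ x) := rfl
  rw [happ, hφ₁, hφ₂]
  have e1 : Finsupp.single i₀ (α • (D₁ • b)) = α • Finsupp.single i₀ (D₁ • b) := by
    have := (Finsupp.singleAddHom (M := A) i₀).map_zsmul α (D₁ • b)
    simpa using this
  have e2 : Finsupp.single i₀ (β • (D₂ • b)) = β • Finsupp.single i₀ (D₂ • b) := by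
    have := (Finsupp.singleAddHom (M := A) i₀).map_zsmul β (D₂ • b)
    simpa using this
  rw [← e1, ← e2, ← Finsupp.single_add]
  congr 1
  have f1 : α • ((D₁ : ℕ) • b) = (α * (D₁ : ℤ)) • b := by
    rw [← natCast_zsmul, smul_smul]
  have f2 : β • ((D₂ : ℕ) • b) = (β * (D₂ : ℤ)) • b := by
    rw [← natCast_zsmul, smul_smul]
  rw [f1, f2, ← add_smul]
  have hone : α * (D₁ : ℤ) + β * (D₂ : ℤ) = 1 := by linarith
  rw [hone, one_smul]

lemma kt_main (hTF : IsTorsionFreeGrp A)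
    (hcomp : ∀ a₁ a₂ : A, a₁ ≠ 0 → a₂ ≠ 0 →
      TypeLE a₁ a₂ ∨ TypeLE a₂ a₁ ∨ piType a₁ ∩ piType a₂ = ∅)
    [Nontrivial I] (h : KrylovTransitive (I →₀ A))
    {x : I →₀ A} (hx : x ≠ 0) {b : A} (hb0 : b ≠ 0)
    (hb : ∀ p : ℕ, p.Prime → pH p x ≤ pH p b) (i₀ : I) :
    ∃ φ : (I →₀ A) →+ (I →₀ A), φ x = Finsupp.single i₀ b := by
  obtain ⟨j, hj⟩ := exists_ne i₀
  have hij : i₀ ≠ j := hj.symm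
  obtain ⟨c, K, hc0, hK0, heq, hge⟩ := kt_AR hTF hcomp hx
  by_cases hdeg : ∃ D : ℕ, D ≠ 0 ∧ D ≤ 5 ∧ c + D • b = 0
  · obtain ⟨D, hD0, hD5, hDz⟩ := hdeg
    have heq_b : ∀ p : ℕ, p.Prime → ¬ p ∣ K * D → pH p b = pH p x := by
      intro p hp hpd
      have hpK : ¬ p ∣ K := fun hd => hpd (dvd_mul_of_dvd_left hd _)
      have hpD : ¬ p ∣ D := fun hd => hpd (dvd_mul_of_dvd_right hd _)
      have hDb : D • b = -c := by linear_combination (norm := abel) hDz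
      have h1 : pH p (D • b) = pH p x := by
        rw [hDb, kt_pH_neg, heq p hp hpK]
      rw [← kt_pH_coprime_smul hp hpD b, h1]
    have heq₁ : ∀ p : ℕ, p.Prime → ¬ p ∣ K * D * 2 → pH p (b + 1 • b) = pH p x := by
      intro p hp hpd
      have hpKD : ¬ p ∣ K * D := fun hd => hpd (dvd_mul_of_dvd_left hd _)
      have hp2 : ¬ p ∣ 2 := fun hd => hpd (dvd_mul_of_dvd_right hd _)
      have h2b : b + 1 • b = 2 • b := by rw [one_nsmul, two_nsmul]
      rw [h2b, kt_pH_coprime_smul hp hp2, heq_b p hp hpKD]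
    obtain ⟨φ, hφ⟩ := kt_step hTF h hij
      (mul_ne_zero (mul_ne_zero hK0 hD0) two_ne_zero)
      (dvd_mul_right (K * D) 2) heq_b hb hb heq₁
    exact ⟨φ, by rw [hφ, one_nsmul]⟩
  · push_neg at hdeg
    have he : ∀ D : ℕ, D ≠ 0 → D ≤ 5 → c + D • b ≠ 0 := hdeg
    obtain ⟨D₁, N₁, hD₁, hN₁, hJ₁⟩ := kt_triple (m := fun p => pH p x) hTF hcomp hge heq hb
      (by norm_num : (1:ℕ) < 2) (by norm_num : (2:ℕ) < 3)
      (he 1 one_ne_zero (by norm_num)) (he 2 two_ne_zero (by norm_num))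
      (he 3 three_ne_zero (by norm_num))
    obtain ⟨ψ₁, hψ₁⟩ := kt_step hTF h hij (mul_ne_zero hK0 hN₁) (dvd_mul_right K N₁)
      heq hge hb hJ₁
    rcases hD₁ with rfl | rfl | rfl
    · exact ⟨ψ₁, by rw [hψ₁, one_nsmul]⟩
    · obtain ⟨D₂, N₂, hD₂, hN₂, hJ₂⟩ := kt_triple (m := fun p => pH p x) hTF hcomp hge heq hb
        (by norm_num : (1:ℕ) < 3) (by norm_num : (3:ℕ) < 5)
        (he 1 one_ne_zero (by norm_num)) (he 3 three_ne_zero (by norm_num))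
        (he 5 (by norm_num) (by norm_num))
      obtain ⟨ψ₂, hψ₂⟩ := kt_step hTF h hij (mul_ne_zero hK0 hN₂) (dvd_mul_right K N₂)
        heq hge hb hJ₂
      rcases hD₂ with rfl | rfl | rfl
      · exact kt_combine (by norm_num) hψ₁ hψ₂
      · exact kt_combine (by norm_num) hψ₁ hψ₂
      · exact kt_combine (by norm_num) hψ₁ hψ₂
    · obtain ⟨D₂, N₂, hD₂, hN₂, hJ₂⟩ := kt_triple (m := fun p => pH p x) hTF hcomp hge heq hb
        (by norm_num : (1:ℕ) < 2) (by norm_num : (2:ℕ) < 4)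
        (he 1 one_ne_zero (by norm_num)) (he 2 two_ne_zero (by norm_num))
        (he 4 (by norm_num) (by norm_num))
      obtain ⟨ψ₂, hψ₂⟩ := kt_step hTF h hij (mul_ne_zero hK0 hN₂) (dvd_mul_right K N₂)
        heq hge hb hJ₂
      rcases hD₂ with rfl | rfl | rfl
      · exact kt_combine (by norm_num) hψ₁ hψ₂
      · exact kt_combine (by norm_num) hψ₁ hψ₂
      · exact kt_combine (by norm_num) hψ₁ hψ₂

end KTTools8
theorem stmt_12 (A : Type*) [AddCommGroup A] (hTF : IsTorsionFreeGrp A)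
    (hcomp : ∀ a₁ a₂ : A, a₁ ≠ 0 → a₂ ≠ 0 →
      TypeLE a₁ a₂ ∨ TypeLE a₂ a₁ ∨ piType a₁ ∩ piType a₂ = ∅)
    (I : Type*) [Nontrivial I]
    (h : KrylovTransitive (I →₀ A)) : FullyTransitive (I →₀ A) := by
  intro x y hxy
  by_cases hx0 : x = 0
  · subst hx0
    have hy0 : y = 0 := by
      obtain ⟨φ, hφ⟩ := h 0 y ⟨hxy, fun p k hp _ => kt_div_zero _⟩
      rw [map_zero] at hφ
      exact hφ.symm
    exact ⟨0, by rw [hy0]; rfl⟩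
  · classical
    have hb : ∀ i : I, ∀ p : ℕ, p.Prime → pH p x ≤ pH p (y i) := fun i p hp =>
      (kt_heightLE_iff.1 hxy p hp).trans (kt_pH_coord p y i)
    have key : ∀ i : I, ∃ φ : (I →₀ A) →+ (I →₀ A), φ x = Finsupp.single i (y i) := by
      intro i
      by_cases hyi : y i = 0
      · exact ⟨0, by rw [hyi, Finsupp.single_zero]; rfl⟩
      · exact kt_main hTF hcomp h hx0 hyi (hb i) i
    choose Φ hΦ using key
    refine ⟨∑ i ∈ y.support, Φ i, ?_⟩
    rw [AddMonoidHom.finset_sum_apply]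
    have : ∑ i ∈ y.support, (Φ i) x = ∑ i ∈ y.support, Finsupp.single i (y i) :=
      Finset.sum_congr rfl fun i _ => hΦ i
    rw [this]
    exact Finsupp.sum_single y
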